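/- For every τ ∈ ℂ, det(w I_n − (J_n + τ E)) = Q_n(w) − τ P_n(w), where E = e_0 e_0^* is the n×n matrix whose only nonzero entry is a 1 in position (0,0); that is, the characteristic polynomial of the rank-one update J_n + τ e_0 e_0^* equals Q_n − τ P_n. -/

import Mathlib

open Polynomial

/-- The `n × n` tridiagonal matrix `J_n` with diagonal entries `c_0, …, c_{n−1}`,
subdiagonal entries `d_1, …, d_{n−1}` (the entry in row `i`, column `i−1` is `d_i`),
and all superdiagonal entries equal to `1`. -/
noncomputable def Jmat (n : ℕ) (c d : ℕ → ℂ) : Matrix (Fin n) (Fin n) ℂ :=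
  Matrix.of fun i j =>
    if (i : ℕ) = (j : ℕ) then c i
    else if (i : ℕ) + 1 = (j : ℕ) then 1
    else if (i : ℕ) = (j : ℕ) + 1 then d i
    else 0

/-- `Q_0 = 1`, `Q_1 = w − c_0`, `Q_{l+1} = (w − c_l) Q_l − d_l Q_{l−1}`. -/
noncomputable def Qpoly (c d : ℕ → ℂ) : ℕ → Polynomial ℂ
  | 0 => 1
  | 1 => X - C (c 0)
  | l + 2 => (X - C (c (l + 1))) * Qpoly c d (l + 1) - C (d (l + 1)) * Qpoly c d l

/-- `P_0 = 0`, `P_1 = 1`, `P_{l+1} = (w − c_l) P_l − d_l P_{l−1}`. -/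
noncomputable def Ppoly (c d : ℕ → ℂ) : ℕ → Polynomial ℂ
  | 0 => 0
  | 1 => 1
  | l + 2 => (X - C (c (l + 1))) * Ppoly c d (l + 1) - C (d (l + 1)) * Ppoly c d l

open Matrix in
private lemma val_succAbove {n : ℕ} (j : Fin (n+1)) (k : Fin n) :
    ((j.succAbove k : Fin (n+1)) : ℕ) = if (k:ℕ) < (j:ℕ) then (k:ℕ) else (k:ℕ)+1 := by
  rcases lt_or_ge (Fin.castSucc k) j with h|h
  · rw [Fin.succAbove_of_castSucc_lt _ _ h]
    have : (k:ℕ) < (j:ℕ) := h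
    simp [this]
  · rw [Fin.succAbove_of_le_castSucc _ _ h]
    have : (j:ℕ) ≤ (k:ℕ) := h
    simp [Nat.not_lt.mpr this]

private lemma charmatrix_Jmat_apply (n : ℕ) (c d : ℕ → ℂ) (i j : Fin n) :
    (Jmat n c d).charmatrix i j =
      if (i:ℕ) = (j:ℕ) then X - C (c i)
      else if (i:ℕ)+1 = (j:ℕ) then -1
      else if (i:ℕ) = (j:ℕ)+1 then -C (d i) else 0 := by
  rcases eq_or_ne i j with h|h
  · subst h; simp [Matrix.charmatrix_apply_eq, Jmat]
  · have hv : (i:ℕ) ≠ (j:ℕ) := fun hh => h (Fin.ext hh)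
    rw [Matrix.charmatrix_apply_ne _ _ _ h]
    simp only [Jmat, Matrix.of_apply, if_neg hv]
    split_ifs <;> simp

private lemma charmatrix_Jmat_submatrix (n k : ℕ) (c d : ℕ → ℂ) (f g : Fin k → Fin n)
    (hf : ∀ i, (f i : ℕ) = i) (hg : ∀ j, (g j : ℕ) = j) :
    ((Jmat n c d).charmatrix).submatrix f g = (Jmat k c d).charmatrix := by
  ext i j
  simp [Matrix.submatrix_apply, charmatrix_Jmat_apply, hf, hg]

private lemma detA (c d : ℕ → ℂ) : ∀ n, (Jmat n c d).charpoly = Qpoly c d n := by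
  intro n
  induction n using Nat.strong_induction_on with
  | _ n ih =>
  match n with
  | 0 => simp [Matrix.charpoly, Qpoly]
  | 1 =>
      rw [Matrix.charpoly, Matrix.det_fin_one]
      simp [charmatrix_Jmat_apply, Qpoly, Jmat]
  | m+2 =>
      rw [Matrix.charpoly, Matrix.det_succ_row _ (Fin.last (m+1))]
      simp only [Fin.succAbove_last]
      rw [Fin.sum_univ_castSucc, Fin.sum_univ_castSucc]
      simp only [Fin.succAbove_last]
      have h0 : ∀ i : Fin m,
          (Jmat (m + 2) c d).charmatrix (Fin.last (m + 1)) i.castSucc.castSucc = 0 := by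
        intro i; have hi := i.isLt
        rw [charmatrix_Jmat_apply]
        simp only [Fin.val_last, Fin.coe_castSucc]
        rw [if_neg (by omega), if_neg (by omega), if_neg (by omega)]
      have hmid : (Jmat (m + 2) c d).charmatrix (Fin.last (m + 1)) (Fin.last m).castSucc
          = -C (d (m+1)) := by
        rw [charmatrix_Jmat_apply]
        simp only [Fin.val_last, Fin.coe_castSucc]
        rw [if_neg (show ¬(m+1 = m) by omega), if_neg (show ¬(m+1+1 = m) by omega),
          if_pos trivial]
      have hdiag : (Jmat (m + 2) c d).charmatrix (Fin.last (m + 1)) (Fin.last (m + 1))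
          = X - C (c (m+1)) := by
        rw [charmatrix_Jmat_apply, if_pos rfl, Fin.val_last]
      have hsub1 : ((Jmat (m+2) c d).charmatrix).submatrix
          Fin.castSucc Fin.castSucc = (Jmat (m+1) c d).charmatrix :=
        charmatrix_Jmat_submatrix _ _ _ _ _ _ (fun i => rfl) (fun i => rfl)
      -- det of the middle minor
      have hB : (((Jmat (m+2) c d).charmatrix).submatrix
          Fin.castSucc (Fin.last m).castSucc.succAbove).det
          = -(Qpoly c d m) := by
        rw [Matrix.det_succ_column _ (Fin.last m)]
        simp only [Fin.succAbove_last]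
        rw [Fin.sum_univ_castSucc]
        simp only [Fin.succAbove_last]
        have hcol : (((Fin.last m).castSucc.succAbove (Fin.last m) : Fin (m+2)) : ℕ) = m+1 := by
          rw [Fin.succAbove_castSucc_self]; rfl
        have hz : ∀ i : Fin m,
            ((Jmat (m+2) c d).charmatrix).submatrix
              Fin.castSucc (Fin.last m).castSucc.succAbove
              i.castSucc (Fin.last m) = 0 := by
          intro i; have hi := i.isLt
          rw [Matrix.submatrix_apply, charmatrix_Jmat_apply, hcol]
          simp only [Fin.coe_castSucc]
          rw [if_neg (by omega), if_neg (by omega), if_neg (by omega)]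
        simp only [hz, mul_zero, zero_mul, Finset.sum_const_zero, zero_add]
        have he : ((Jmat (m+2) c d).charmatrix).submatrix
            Fin.castSucc (Fin.last m).castSucc.succAbove
            (Fin.last m) (Fin.last m) = -1 := by
          rw [Matrix.submatrix_apply, charmatrix_Jmat_apply, hcol]
          simp only [Fin.coe_castSucc, Fin.val_last]
          rw [if_neg (show ¬(m = m+1) by omega), if_pos trivial]
        rw [he, Matrix.submatrix_submatrix]
        have hsub : ((Jmat (m+2) c d).charmatrix).submatrix
            (Fin.castSucc ∘ Fin.castSucc)
            ((Fin.last m).castSucc.succAbove ∘ Fin.castSucc)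
            = (Jmat m c d).charmatrix := by
          apply charmatrix_Jmat_submatrix
          · intro i; rfl
          · intro i; have hi := i.isLt
            simp only [Function.comp_apply]
            rw [Fin.succAbove_castSucc_of_lt _ _ (by exact hi)]
            rfl
        rw [hsub, show ((Jmat m c d).charmatrix).det = (Jmat m c d).charpoly from rfl,
          ih m (by omega)]
        have hsign : ((-1 : Polynomial ℂ) ^ ((Fin.last m : ℕ) + (Fin.last m : ℕ))) = 1 :=
          Even.neg_one_pow ⟨(Fin.last m : ℕ), rfl⟩
        rw [hsign]; ring
      simp only [h0, mul_zero, zero_mul, Finset.sum_const_zero, zero_add]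
      rw [hmid, hdiag, hsub1, hB,
        show ((Jmat (m+1) c d).charmatrix).det = (Jmat (m+1) c d).charpoly from rfl,
        ih (m+1) (by omega)]
      have hs1 : ((-1 : Polynomial ℂ) ^ ((Fin.last (m+1) : ℕ) + ((Fin.last m).castSucc : ℕ))) = -1 := by
        rw [Fin.val_last, Fin.coe_castSucc, Fin.val_last]
        exact Odd.neg_one_pow ⟨m, by ring⟩
      have hs2 : ((-1 : Polynomial ℂ) ^ ((Fin.last (m+1) : ℕ) + (Fin.last (m+1) : ℕ))) = 1 :=
        Even.neg_one_pow ⟨(Fin.last (m+1) : ℕ), rfl⟩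
      rw [hs1, hs2]
      show _ = (X - C (c (m + 1))) * Qpoly c d (m + 1) - C (d (m + 1)) * Qpoly c d m
      ring

private lemma Qshift (c d : ℕ → ℂ) (τ : ℂ) :
    ∀ n, Qpoly (Function.update c 0 (c 0 + τ)) d n = Qpoly c d n - C τ * Ppoly c d n := by
  intro n
  induction n using Nat.strong_induction_on with
  | _ n ih =>
  match n with
  | 0 => simp [Qpoly, Ppoly]
  | 1 =>
      show X - C (Function.update c 0 (c 0 + τ) 0) = _
      rw [Function.update_self]
      show _ = (X - C (c 0)) - C τ * 1
      rw [map_add]; ring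
  | m+2 =>
      show (X - C (Function.update c 0 (c 0 + τ) (m+1))) * Qpoly _ d (m+1)
          - C (d (m+1)) * Qpoly _ d m = _
      rw [Function.update_of_ne (by omega) _ c, ih (m+1) (by omega), ih m (by omega)]
      show _ = Qpoly c d (m+2) - C τ * ((X - C (c (m + 1))) * Ppoly c d (m + 1)
          - C (d (m + 1)) * Ppoly c d m)
      show _ = ((X - C (c (m + 1))) * Qpoly c d (m + 1) - C (d (m + 1)) * Qpoly c d m) - _
      ring

private lemma Jmat_update (n : ℕ) (hn : 1 ≤ n) (c d : ℕ → ℂ) (τ : ℂ) :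
    Jmat n c d + τ • Matrix.single (⟨0, hn⟩ : Fin n) (⟨0, hn⟩ : Fin n) (1 : ℂ)
      = Jmat n (Function.update c 0 (c 0 + τ)) d := by
  ext i j
  simp only [Matrix.add_apply, Matrix.smul_apply, smul_eq_mul, Jmat, Matrix.of_apply,
    Matrix.single, Function.update_apply]
  by_cases hij : (i:ℕ) = (j:ℕ)
  · rw [if_pos hij, if_pos hij]
    by_cases h0 : (i:ℕ) = 0
    · have hc : (⟨0, hn⟩ : Fin n) = i ∧ (⟨0, hn⟩ : Fin n) = j :=
        ⟨Fin.ext h0.symm, Fin.ext (by simp; omega)⟩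
      rw [if_pos hc, if_pos h0, h0]; ring
    · have hc : ¬((⟨0, hn⟩ : Fin n) = i ∧ (⟨0, hn⟩ : Fin n) = j) :=
        fun h => h0 (by rw [← h.1])
      rw [if_neg hc, if_neg h0]; ring
  · rw [if_neg hij, if_neg hij]
    have hc : ¬((⟨0, hn⟩ : Fin n) = i ∧ (⟨0, hn⟩ : Fin n) = j) :=
      fun h => hij (by rw [← h.1, ← h.2])
    rw [if_neg hc]
    ring


/-- For every `τ ∈ ℂ`, the characteristic polynomial of the rank-one update
`J_n + τ e_0 e_0^*` equals `Q_n − τ P_n`; here `e_0 e_0^*` is the matrix whose only nonzero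
entry is a `1` in position `(0,0)`. -/
theorem charpoly_rank_one_update (n : ℕ) (hn : 1 ≤ n) (c d : ℕ → ℂ) (τ : ℂ) :
    (Jmat n c d + τ • Matrix.single (⟨0, hn⟩ : Fin n) (⟨0, hn⟩ : Fin n) (1 : ℂ)).charpoly
      = Qpoly c d n - C τ * Ppoly c d n := by
  rw [Jmat_update n hn c d τ, detA, Qshift]
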